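/- Let A₁ ∈ U_1. Then there exist symmetric matrices A₂, ..., A_m ∈ U_1 with A₁ + A₂ + ... + A_m = E (the all-ones matrix) such that the quadratic stochastic operator V with coefficients p_{ij,k} = (A_k)_{ij} is doubly stochastic. -/

import Mathlib

/-- Sum of the `k` largest entries of `x`, as a supremum over `k`-element subsets. -/
noncomputable def maxSum (m : ℕ) (x : Fin m → ℝ) (k : ℕ) : ℝ :=
  sSup {r : ℝ | ∃ s : Finset (Fin m), s.card = k ∧ r = ∑ i ∈ s, x i}

/-- `x ≺ y` : `x` is majorized by `y`. -/
def IsMajorizedBy (m : ℕ) (x y : Fin m → ℝ) : Prop :=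
  ∀ k : ℕ, 1 ≤ k → k ≤ m - 1 → maxSum m x k ≤ maxSum m y k

/-- Conditions on the coefficients of a quadratic stochastic operator. -/
def QSOCoeffs (m : ℕ) (p : Fin m → Fin m → Fin m → ℝ) : Prop :=
  (∀ i j k, p i j k = p j i k) ∧ (∀ i j k, 0 ≤ p i j k) ∧ (∀ i j, ∑ k, p i j k = 1)

/-- The quadratic map determined by the coefficients. -/
def QSOMap (m : ℕ) (p : Fin m → Fin m → Fin m → ℝ) (x : Fin m → ℝ) : Fin m → ℝ :=
  fun k => ∑ i, ∑ j, p i j k * x i * x j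

/-- A doubly stochastic quadratic operator: `V x ≺ x` for all `x` in the simplex. -/
def IsDSQO (m : ℕ) (p : Fin m → Fin m → Fin m → ℝ) : Prop :=
  QSOCoeffs m p ∧ ∀ x ∈ stdSimplex ℝ (Fin m), IsMajorizedBy m (QSOMap m p x) x

/-- The set `U_1` of symmetric nonnegative matrices with all principal-block sums
bounded by the block size and total sum `m`. -/
def U1 (m : ℕ) : Set (Matrix (Fin m) (Fin m) ℝ) :=
  {A | A.IsSymm ∧ (∀ i j, 0 ≤ A i j) ∧
    (∀ α : Finset (Fin m), ∑ i ∈ α, ∑ j ∈ α, A i j ≤ (α.card : ℝ)) ∧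
    (∑ i, ∑ j, A i j = (m : ℝ))}

/-- The all-ones matrix `E`. -/
def Ematrix (m : ℕ) : Matrix (Fin m) (Fin m) ℝ := Matrix.of fun _ _ => 1



section bounds
variable {m : ℕ} {A : Matrix (Fin m) (Fin m) ℝ}

lemma symm_apply (hA : A ∈ U1 m) (i j : Fin m) : A i j = A j i := by
  have h := hA.1
  have := congrFun (congrFun h j) i
  simpa [Matrix.transpose_apply] using this

lemma entry_le_one (hA : A ∈ U1 m) (i j : Fin m) : A i j ≤ 1 := by
  obtain ⟨hs, hp, hb, ht⟩ := hA
  by_cases h : i = j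
  · subst h
    have := hb {i}
    simpa using this
  · have hb2 := hb {i, j}
    rw [Finset.sum_insert (by simp [h]), Finset.sum_singleton,
      Finset.sum_insert (by simp [h]), Finset.sum_singleton,
      Finset.sum_insert (by simp [h]), Finset.sum_singleton] at hb2
    have hcard : ({i, j} : Finset (Fin m)).card = 2 := by
      rw [Finset.card_insert_of_notMem (by simp [h]), Finset.card_singleton]
    rw [hcard] at hb2
    push_cast at hb2
    have hji : A j i = A i j := (symm_apply ⟨hs, hp, hb, ht⟩ i j).symm
    have := hp i i; have := hp j j
    linarith [hp i i, hp j j, hb2, hji]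

-- cross sums
lemma cross_nonneg (hA : A ∈ U1 m) (α β : Finset (Fin m)) : 0 ≤ ∑ i ∈ α, ∑ j ∈ β, A i j :=
  Finset.sum_nonneg fun i _ => Finset.sum_nonneg fun j _ => hA.2.1 i j

lemma cross_le_card (hA : A ∈ U1 m) (α β : Finset (Fin m)) :
    ∑ i ∈ α, ∑ j ∈ β, A i j ≤ (α.card : ℝ) * β.card := by
  calc ∑ i ∈ α, ∑ j ∈ β, A i j ≤ ∑ i ∈ α, ∑ j ∈ β, (1:ℝ) := by
        apply Finset.sum_le_sum; intro i _; apply Finset.sum_le_sum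
        intro j _; exact entry_le_one hA i j
    _ = (α.card : ℝ) * β.card := by simp [mul_comm]

lemma cross_swap (hA : A ∈ U1 m) (α β : Finset (Fin m)) :
    ∑ i ∈ α, ∑ j ∈ β, A i j = ∑ i ∈ β, ∑ j ∈ α, A i j := by
  refine Finset.sum_comm.trans ?_
  exact Finset.sum_congr rfl fun i _ => Finset.sum_congr rfl fun j _ => (symm_apply hA j i)

lemma two_cross_le (hA : A ∈ U1 m) (α β : Finset (Fin m)) (hab : α ⊆ β) :
    2 * (∑ i ∈ α, ∑ j ∈ β, A i j) ≤ (α.card : ℝ) + β.card := by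
  obtain ⟨hs, hp, hb, ht⟩ := hA
  have hsplit : ∀ γ δ : Finset (Fin m), γ ⊆ δ →
      ∀ g : Fin m → ℝ, ∑ i ∈ δ, g i = ∑ i ∈ γ, g i + ∑ i ∈ δ \ γ, g i := by
    intro γ δ hgd g
    rw [add_comm, Finset.sum_sdiff hgd]
  -- ∑_{α×β} = ∑_{α×α} + ∑_{α×(β\α)}
  have h1 : ∑ i ∈ α, ∑ j ∈ β, A i j
      = ∑ i ∈ α, ∑ j ∈ α, A i j + ∑ i ∈ α, ∑ j ∈ β \ α, A i j := by
    rw [← Finset.sum_add_distrib]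
    exact Finset.sum_congr rfl fun i _ => hsplit α β hab _
  have h2 : ∑ i ∈ β, ∑ j ∈ β, A i j
      = ∑ i ∈ α, ∑ j ∈ α, A i j + ∑ i ∈ α, ∑ j ∈ β \ α, A i j
        + (∑ i ∈ β \ α, ∑ j ∈ α, A i j + ∑ i ∈ β \ α, ∑ j ∈ β \ α, A i j) := by
    rw [hsplit α β hab, ← Finset.sum_add_distrib, ← Finset.sum_add_distrib]
    congr 1
    · exact Finset.sum_congr rfl fun i _ => hsplit α β hab _
    · exact Finset.sum_congr rfl fun i _ => hsplit α β hab _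
  have h3 : ∑ i ∈ β \ α, ∑ j ∈ α, A i j = ∑ i ∈ α, ∑ j ∈ β \ α, A i j :=
    cross_swap ⟨hs, hp, hb, ht⟩ _ _
  have hnn : 0 ≤ ∑ i ∈ β \ α, ∑ j ∈ β \ α, A i j := cross_nonneg ⟨hs, hp, hb, ht⟩ _ _
  have hba := hb α
  have hbb := hb β
  linarith [h1, h2, h3, hnn, hba, hbb]

lemma two_cross_univ_ge (hA : A ∈ U1 m) (α : Finset (Fin m)) :
    (α.card : ℝ) ≤ 2 * ∑ i ∈ α, ∑ j ∈ Finset.univ, A i j := by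
  obtain ⟨hs, hp, hb, ht⟩ := hA
  have hsplit : ∀ g : Fin m → ℝ, ∑ i, g i = ∑ i ∈ α, g i + ∑ i ∈ Finset.univ \ α, g i := by
    intro g; rw [add_comm, Finset.sum_sdiff (Finset.subset_univ α)]
  have h2 : (m : ℝ) = ∑ i ∈ α, ∑ j ∈ α, A i j + ∑ i ∈ α, ∑ j ∈ Finset.univ \ α, A i j
        + (∑ i ∈ Finset.univ \ α, ∑ j ∈ α, A i j
          + ∑ i ∈ Finset.univ \ α, ∑ j ∈ Finset.univ \ α, A i j) := by
    rw [← ht, hsplit (fun i => ∑ j, A i j), ← Finset.sum_add_distrib, ← Finset.sum_add_distrib]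
    congr 1
    · exact Finset.sum_congr rfl fun i _ => hsplit _
    · exact Finset.sum_congr rfl fun i _ => hsplit _
  have h1 : ∑ i ∈ α, ∑ j ∈ Finset.univ, A i j
      = ∑ i ∈ α, ∑ j ∈ α, A i j + ∑ i ∈ α, ∑ j ∈ Finset.univ \ α, A i j := by
    rw [← Finset.sum_add_distrib]
    exact Finset.sum_congr rfl fun i _ => hsplit _
  have h3 : ∑ i ∈ Finset.univ \ α, ∑ j ∈ α, A i j = ∑ i ∈ α, ∑ j ∈ Finset.univ \ α, A i j :=
    cross_swap ⟨hs, hp, hb, ht⟩ _ _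
  have h4 := hb (Finset.univ \ α)
  have h5 : ((Finset.univ \ α).card : ℝ) = m - α.card := by
    rw [Finset.card_sdiff_of_subset (Finset.subset_univ α)]
    have := Finset.card_le_univ α
    push_cast [Finset.card_univ]
    rw [Nat.cast_sub (by simpa using this)]
    simp
  have h6 : 0 ≤ ∑ i ∈ α, ∑ j ∈ α, A i j := cross_nonneg ⟨hs, hp, hb, ht⟩ _ _
  rw [h5] at h4
  linarith


lemma cb_mono (hA : A ∈ U1 m) (α β : Finset (Fin m)) :
    ∑ i ∈ α, ∑ j ∈ β, (1 - A i j) ≤ ∑ i ∈ Finset.univ, ∑ j ∈ Finset.univ, (1 - A i j) := by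
  have hnn : ∀ i j : Fin m, 0 ≤ 1 - A i j := fun i j => by
    linarith [entry_le_one hA i j]
  apply le_trans (Finset.sum_le_sum_of_subset_of_nonneg (Finset.subset_univ α)
    (fun i _ _ => Finset.sum_nonneg fun j _ => hnn i j))
  apply Finset.sum_le_sum
  intro i _
  exact Finset.sum_le_sum_of_subset_of_nonneg (Finset.subset_univ β) (fun j _ _ => hnn i j)

lemma cb_le_total (hA : A ∈ U1 m) (α β : Finset (Fin m)) :
    ∑ i ∈ α, ∑ j ∈ β, (1 - A i j) ≤ (m:ℝ) * m - m := by
  refine le_trans (cb_mono hA α β) ?_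
  have h : ∑ i ∈ Finset.univ, ∑ j ∈ Finset.univ, (1 - A i j)
      = (m:ℝ) * m - ∑ i : Fin m, ∑ j : Fin m, A i j := by
    simp [Finset.sum_sub_distrib]
  rw [h, hA.2.2.2]

lemma cb_le_row (hA : A ∈ U1 m) (α β : Finset (Fin m)) :
    2 * ∑ i ∈ α, ∑ j ∈ β, (1 - A i j) ≤ (α.card : ℝ) * (2 * m - 1) := by
  have hnn : ∀ i j : Fin m, 0 ≤ 1 - A i j := fun i j => by
    linarith [entry_le_one hA i j]
  have h1 : ∑ i ∈ α, ∑ j ∈ β, (1 - A i j) ≤ ∑ i ∈ α, ∑ j ∈ Finset.univ, (1 - A i j) := by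
    apply Finset.sum_le_sum
    intro i _
    exact Finset.sum_le_sum_of_subset_of_nonneg (Finset.subset_univ β) (fun j _ _ => hnn i j)
  have h2 : ∑ i ∈ α, ∑ j ∈ Finset.univ, (1 - A i j)
      = (α.card : ℝ) * m - ∑ i ∈ α, ∑ j ∈ Finset.univ, A i j := by
    simp [Finset.sum_sub_distrib]
  have h3 := two_cross_univ_ge hA α
  linarith

end bounds


lemma maxSum_bddAbove (m k : ℕ) (x : Fin m → ℝ) :
    BddAbove {r : ℝ | ∃ s : Finset (Fin m), s.card = k ∧ r = ∑ i ∈ s, x i} := by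
  have hsub : {r : ℝ | ∃ s : Finset (Fin m), s.card = k ∧ r = ∑ i ∈ s, x i}
      ⊆ ↑((Finset.univ.powersetCard k).image (fun s => ∑ i ∈ s, x i)) := by
    rintro r ⟨s, hs, rfl⟩
    simp only [Finset.coe_image, Set.mem_image, Finset.mem_coe, Finset.mem_powersetCard]
    exact ⟨s, ⟨Finset.subset_univ s, hs⟩, rfl⟩
  exact BddAbove.mono hsub ((Finset.univ.powersetCard k).image _).finite_toSet.bddAbove

lemma sum_le_maxSum (m k : ℕ) (x : Fin m → ℝ) (s : Finset (Fin m)) (hs : s.card = k) :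
    ∑ i ∈ s, x i ≤ maxSum m x k :=
  le_csSup (maxSum_bddAbove m k x) ⟨s, hs, rfl⟩

lemma maxSum_le (m k : ℕ) (x : Fin m → ℝ) (c : ℝ) (hc : 0 ≤ c)
    (h : ∀ s : Finset (Fin m), s.card = k → ∑ i ∈ s, x i ≤ c) :
    maxSum m x k ≤ c := by
  apply Real.sSup_le _ hc
  rintro r ⟨s, hs, rfl⟩
  exact h s hs

-- case S ≤ K : mn r = R, mn s = S
lemma pt1a (M K R S c : ℝ) (hKM : K ≤ M - 1) (hK1 : 1 ≤ K)
    (hcRS : c ≤ R * S) (hc0 : 0 ≤ c) (hR0 : 0 ≤ R) (hS0 : 0 ≤ S) :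
    2 * ((M - K) * c) + 2 * ((K - 1) * (R * S)) ≤ (M - 1) * (R * S + S * R) := by
  nlinarith [mul_le_mul_of_nonneg_left hcRS (by linarith : (0:ℝ) ≤ M - K)]

-- case R ≤ K ≤ S : mn r = R, mn s = K
lemma pt1b (M K R S c : ℝ) (hKM : K ≤ M - 1) (hK1 : 1 ≤ K)
    (hR1 : 1 ≤ R) (hRK : R ≤ K) (hKS : K ≤ S) (hSM : S ≤ M)
    (h2c : 2 * c ≤ R + S) (hc0 : 0 ≤ c) :
    2 * ((M - K) * c) + 2 * ((K - 1) * (R * S)) ≤ (M - 1) * (R * S + K * R) := by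
  nlinarith [mul_le_mul_of_nonneg_left h2c (by linarith : (0:ℝ) ≤ M - K),
    mul_nonneg (by linarith : (0:ℝ) ≤ R - 1)
      (add_nonneg (mul_nonneg (by linarith : (0:ℝ) ≤ K - 1) (by linarith : (0:ℝ) ≤ M - S))
        (mul_nonneg (by linarith : (0:ℝ) ≤ S) (by linarith : (0:ℝ) ≤ M - K))),
    mul_nonneg (by linarith : (0:ℝ) ≤ K - 1) (by linarith : (0:ℝ) ≤ M - S)]

-- case K ≤ R ≤ S : mn r = K, mn s = K
lemma pt1c (M K R S c : ℝ) (hKM : K ≤ M - 1) (hK1 : 1 ≤ K)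
    (hR1 : 1 ≤ R) (hRS : R ≤ S) (hSM : S ≤ M)
    (h2c : 2 * c ≤ R + S) (hc0 : 0 ≤ c) :
    2 * ((M - K) * c) + 2 * ((K - 1) * (R * S)) ≤ (M - 1) * (K * S + K * R) := by
  nlinarith [mul_le_mul_of_nonneg_left h2c (by linarith : (0:ℝ) ≤ M - K),
    mul_nonneg (mul_nonneg (by linarith : (0:ℝ) ≤ K - 1) (by linarith : (0:ℝ) ≤ R))
      (by linarith : (0:ℝ) ≤ M - S),
    mul_nonneg (mul_nonneg (by linarith : (0:ℝ) ≤ K - 1) (by linarith : (0:ℝ) ≤ S))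
      (by linarith : (0:ℝ) ≤ M - R)]

lemma pt2a (M K R S e : ℝ) (hKM : K ≤ M - 1) (hK1 : 1 ≤ K)
    (heRS : e ≤ R * S) (he0 : 0 ≤ e) (hR0 : 0 ≤ R) (hS0 : 0 ≤ S) :
    2 * (K * e) ≤ (M - 1) * (R * S + S * R) := by
  nlinarith [mul_le_mul hKM heRS he0 (by linarith : (0:ℝ) ≤ M - 1)]

lemma pt2b (M K R S e : ℝ) (hKM : K ≤ M - 1) (hK1 : 1 ≤ K)
    (hR1 : 1 ≤ R) (hRK : R ≤ K) (hKS : K ≤ S) (hSM : S ≤ M)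
    (hSd : S ≤ M - 1 ∨ S = M)
    (heRS : e ≤ R * S) (he0 : 0 ≤ e) (hB4 : 2 * e ≤ R * (2 * M - 1)) :
    2 * (K * e) ≤ (M - 1) * (R * S + K * R) := by
  rcases hSd with h | h
  · nlinarith [mul_le_mul_of_nonneg_left heRS (by linarith : (0:ℝ) ≤ K),
      mul_nonneg (by linarith : (0:ℝ) ≤ R)
        (add_nonneg (mul_nonneg (by linarith : (0:ℝ) ≤ S) (by linarith : (0:ℝ) ≤ M - 1 - K))
          (mul_nonneg (by linarith : (0:ℝ) ≤ K) (by linarith : (0:ℝ) ≤ M - 1 - S)))]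
  · rw [h]
    nlinarith [mul_le_mul_of_nonneg_left hB4 (by linarith : (0:ℝ) ≤ K),
      mul_nonneg (mul_nonneg (by linarith : (0:ℝ) ≤ R) (by linarith : (0:ℝ) ≤ M))
        (by linarith : (0:ℝ) ≤ M - 1 - K), h]

lemma pt2c (M K R S e : ℝ) (hKM : K ≤ M - 1) (hK1 : 1 ≤ K) (hM2 : 2 ≤ M)
    (hR1 : 1 ≤ R) (hRS : R ≤ S) (hKR : K ≤ R) (hSM : S ≤ M)
    (hSd : S ≤ M - 1 ∨ S = M) (hRd : R ≤ M - 1 ∨ R = M)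
    (heRS : e ≤ R * S) (he0 : 0 ≤ e) (hB4 : 2 * e ≤ R * (2 * M - 1))
    (hB5 : e ≤ M * M - M) :
    2 * (K * e) ≤ (M - 1) * (K * S + K * R) := by
  have key : 2 * e ≤ (M - 1) * (R + S) := by
    rcases hSd with h | h
    · nlinarith [mul_nonneg (by linarith : (0:ℝ) ≤ R) (by linarith : (0:ℝ) ≤ M - 1 - S),
        mul_nonneg (by linarith : (0:ℝ) ≤ S) (by linarith : (0:ℝ) ≤ M - 1 - R)]
    · rcases hRd with h2 | h2
      · rw [h]; nlinarith [mul_nonneg (by linarith : (0:ℝ) ≤ M) (by linarith : (0:ℝ) ≤ M - 1 - R), h]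
      · rw [h]; nlinarith [h, h2]
  nlinarith [mul_le_mul_of_nonneg_left key (by linarith : (0:ℝ) ≤ K)]

set_option maxHeartbeats 2000000 in
lemma core_ineq (m : ℕ) (hm : 2 ≤ m) (A : Matrix (Fin m) (Fin m) ℝ)
    (hA : A ∈ U1 m) (x : Fin m → ℝ) (hx : x ∈ stdSimplex ℝ (Fin m))
    (k : ℕ) (hk1 : 1 ≤ k) (hk2 : k ≤ m - 1) :
    ((m:ℝ) - k) * (∑ i, ∑ j, A i j * x i * x j) + ((k:ℝ) - 1)
      ≤ ((m:ℝ) - 1) * maxSum m x k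
    ∧ (k:ℝ) * (1 - ∑ i, ∑ j, A i j * x i * x j)
      ≤ ((m:ℝ) - 1) * maxSum m x k := by
  have hxn : ∀ i, 0 ≤ x i := hx.1
  have hx1 : ∑ i, x i = 1 := hx.2
  -- sorting
  set σ : Equiv.Perm (Fin m) := Tuple.sort (fun i => -x i) with hσdef
  have hmono : Monotone ((fun i => -x i) ∘ σ) := Tuple.monotone_sort (fun i => -x i)
  have hy : ∀ r s : Fin m, r ≤ s → x (σ s) ≤ x (σ r) := by
    intro r s hrs; have := hmono hrs; simpa using this
  set Y : ℕ → ℝ := fun j => if h : j < m then x (σ ⟨j, h⟩) else 0 with hYdef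
  have hY0 : ∀ j, 0 ≤ Y j := by
    intro j; rw [hYdef]; dsimp only; split
    · exact hxn _
    · exact le_refl 0
  have hYanti : ∀ j1 j2 : ℕ, j1 ≤ j2 → Y j2 ≤ Y j1 := by
    intro j1 j2 h12
    by_cases h2 : j2 < m
    · have h1 : j1 < m := lt_of_le_of_lt h12 h2
      rw [hYdef]; dsimp only
      rw [dif_pos h2, dif_pos h1]
      exact hy ⟨j1, h1⟩ ⟨j2, h2⟩ h12
    · have : Y j2 = 0 := by rw [hYdef]; dsimp only; rw [dif_neg h2]
      rw [this]; exact hY0 j1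
  set d : Fin m → ℝ := fun r => Y r - Y ((r:ℕ)+1) with hddef
  have hd : ∀ r, 0 ≤ d r := by
    intro r; rw [hddef]; dsimp only
    have := hYanti r ((r:ℕ)+1) (Nat.le_succ _)
    linarith
  set α : Fin m → Finset (Fin m) := fun r => (Finset.Iic r).image σ with hαdef
  have hmem : ∀ (i : Fin m) (r : Fin m), i ∈ α r ↔ σ.symm i ≤ r := by
    intro i r
    rw [hαdef]; dsimp only
    simp only [Finset.mem_image, Finset.mem_Iic]
    constructor
    · rintro ⟨u, hu, rfl⟩; simpa using hu
    · intro h; exact ⟨σ.symm i, h, by simp⟩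
  have hcard : ∀ r : Fin m, (α r).card = (r:ℕ) + 1 := by
    intro r
    rw [hαdef]; dsimp only
    rw [Finset.card_image_of_injective _ σ.injective]
    simp [Nat.card_Iic]
  have hαmono : ∀ r s : Fin m, r ≤ s → α r ⊆ α s := by
    intro r s hrs
    rw [hαdef]; dsimp only
    exact Finset.image_subset_image (Finset.Iic_subset_Iic.2 hrs)
  -- telescoping
  have htel : ∀ j : ℕ, j ≤ m → ∑ n ∈ Finset.Ico j m, (Y n - Y (n+1)) = Y j := by
    intro j hj
    rw [Finset.sum_Ico_eq_sum_range]
    simp only [Nat.add_assoc]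
    rw [Finset.sum_range_sub' (fun i => Y (j + i)) (m - j)]
    have h1 : j + (m - j) = m := by omega
    have h2 : Y m = 0 := by rw [hYdef]; dsimp only; rw [dif_neg (lt_irrefl m)]
    simp only [add_zero, h1, h2, sub_zero]
  -- indicator expansion of x
  have hxd : ∀ i : Fin m, x i = ∑ r, (if i ∈ α r then d r else 0) := by
    intro i
    symm
    calc ∑ r, (if i ∈ α r then d r else 0)
        = ∑ r : Fin m, (fun n : ℕ => if ((σ.symm i : ℕ)) ≤ n then Y n - Y (n+1) else 0) (r:ℕ) := by
          apply Finset.sum_congr rfl; intro r _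
          simp only [hmem, hddef, Fin.le_def]
      _ = ∑ n ∈ Finset.range m, (if ((σ.symm i : ℕ)) ≤ n then Y n - Y (n+1) else 0) :=
          Fin.sum_univ_eq_sum_range (fun n : ℕ => if ((σ.symm i : ℕ)) ≤ n then Y n - Y (n+1) else 0) m
      _ = ∑ n ∈ (Finset.range m).filter (fun n => (σ.symm i : ℕ) ≤ n), (Y n - Y (n+1)) :=
          (Finset.sum_filter _ _).symm
      _ = ∑ n ∈ Finset.Ico ((σ.symm i : ℕ)) m, (Y n - Y (n+1)) := by
          congr 1
          ext n
          simp only [Finset.mem_Ico, Finset.mem_filter, Finset.mem_range]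
          tauto
      _ = Y ((σ.symm i : ℕ)) := htel _ (le_of_lt (σ.symm i).isLt)
      _ = x i := by
          rw [hYdef]; dsimp only
          rw [dif_pos (σ.symm i).isLt]
          congr 1
          simp
  -- indicator collapse lemma
  have ind_sum : ∀ (γ : Finset (Fin m)) (c : ℝ) (g : Fin m → ℝ),
      ∑ i, (if i ∈ γ then c else 0) * g i = c * ∑ i ∈ γ, g i := by
    intro γ c g
    have h1 : ∀ i : Fin m, (if i ∈ γ then c else 0) * g i = (if i ∈ γ then c * g i else 0) := by
      intro i; split <;> simp
    rw [Finset.sum_congr rfl (fun i _ => h1 i)]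
    rw [Finset.sum_ite_mem, Finset.univ_inter, Finset.mul_sum]
  -- single collapse
  have e1 : ∀ g : Fin m → ℝ, ∑ i, g i * x i = ∑ r, d r * ∑ i ∈ α r, g i := by
    intro g
    calc ∑ i, g i * x i = ∑ i, g i * ∑ r, (if i ∈ α r then d r else 0) :=
          Finset.sum_congr rfl (fun i _ => by rw [← hxd i])
      _ = ∑ i, ∑ r, (if i ∈ α r then d r else 0) * g i := by
          apply Finset.sum_congr rfl; intro i _
          rw [Finset.mul_sum]
          apply Finset.sum_congr rfl; intro r _; ring
      _ = ∑ r, ∑ i, (if i ∈ α r then d r else 0) * g i := Finset.sum_comm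
      _ = ∑ r, d r * ∑ i ∈ α r, g i :=
          Finset.sum_congr rfl (fun r _ => ind_sum (α r) (d r) g)
  -- subset sums of x
  have hγ : ∀ γ : Finset (Fin m), ∑ i ∈ γ, x i = ∑ r, d r * ((γ ∩ α r).card : ℝ) := by
    intro γ
    calc ∑ i ∈ γ, x i = ∑ i ∈ γ, ∑ r, (if i ∈ α r then d r else 0) :=
          Finset.sum_congr rfl (fun i _ => hxd i)
      _ = ∑ r, ∑ i ∈ γ, (if i ∈ α r then d r else 0) := Finset.sum_comm
      _ = ∑ r, d r * ((γ ∩ α r).card : ℝ) := by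
          apply Finset.sum_congr rfl; intro r _
          rw [Finset.sum_ite_mem, Finset.sum_const, nsmul_eq_mul, mul_comm]
  -- abbreviations
  set Mr : ℝ := (m : ℝ) with hMr
  set K : ℝ := (k : ℝ) with hK
  set Rr : Fin m → ℝ := fun r => ((r:ℕ) : ℝ) + 1 with hRr
  set mn : Fin m → ℝ := fun r => min K (Rr r) with hmn
  have hRcast : ∀ r : Fin m, ((α r).card : ℝ) = Rr r := by
    intro r; rw [hcard r]; rw [hRr]; push_cast; ring
  have hsum1 : ∑ r, d r * Rr r = 1 := by
    have h := hγ Finset.univ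
    rw [hx1] at h
    symm
    rw [h]
    apply Finset.sum_congr rfl; intro r _
    congr 1
    rw [Finset.univ_inter, hRcast r]
  -- cast facts
  have hMK : K ≤ Mr - 1 := by
    rw [hK, hMr]
    have hkm : k + 1 ≤ m := by omega
    have := (Nat.cast_le (α := ℝ)).2 hkm
    push_cast at this
    linarith
  have hK1 : (1:ℝ) ≤ K := by rw [hK]; exact_mod_cast hk1
  have hM2 : (2:ℝ) ≤ Mr := by rw [hMr]; exact_mod_cast hm
  have hR1 : ∀ r : Fin m, (1:ℝ) ≤ Rr r := by
    intro r; rw [hRr]; dsimp only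
    have : (0:ℝ) ≤ ((r:ℕ):ℝ) := Nat.cast_nonneg _
    linarith
  have hRM : ∀ r : Fin m, Rr r ≤ Mr := by
    intro r; rw [hRr, hMr]; dsimp only
    have : (r:ℕ) + 1 ≤ m := r.isLt
    exact_mod_cast this
  have hRmono : ∀ r s : Fin m, r ≤ s → Rr r ≤ Rr s := by
    intro r s hrs; rw [hRr]; dsimp only
    have : (r:ℕ) ≤ (s:ℕ) := hrs
    have := (Nat.cast_le (α := ℝ)).2 this
    linarith
  have hRd : ∀ r : Fin m, Rr r ≤ Mr - 1 ∨ Rr r = Mr := by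
    intro r
    rcases Nat.lt_or_ge ((r:ℕ) + 1) m with h | h
    · left; rw [hRr, hMr]; dsimp only
      have : (r:ℕ) + 1 + 1 ≤ m := h
      have := (Nat.cast_le (α := ℝ)).2 this
      push_cast at this; linarith
    · right; rw [hRr, hMr]; dsimp only
      have : (r:ℕ) + 1 = m := le_antisymm r.isLt h
      exact_mod_cast this
  -- the top-k subset
  have hkm1 : k - 1 < m := by omega
  set q : Fin m := ⟨k - 1, hkm1⟩ with hqdef
  have hqcard : (α q).card = k := by rw [hcard q]; simp [hqdef]; omega
  have hmin : ∀ r : Fin m, ((α q ∩ α r).card : ℝ) = mn r := by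
    intro r
    rcases le_total q r with h | h
    · have hsub := hαmono q r h
      rw [Finset.inter_eq_left.2 hsub, hqcard]
      rw [hmn]; dsimp only
      have hkr : (k:ℝ) ≤ Rr r := by
        rw [hRr]; dsimp only
        have : k - 1 ≤ (r:ℕ) := h
        have : k ≤ (r:ℕ) + 1 := by omega
        exact_mod_cast this
      rw [hK, min_eq_left hkr]
    · have hsub := hαmono r q h
      rw [Finset.inter_eq_right.2 hsub, hRcast r]
      rw [hmn]; dsimp only
      have hkr : Rr r ≤ (k:ℝ) := by
        rw [hRr]; dsimp only
        have : (r:ℕ) ≤ k - 1 := h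
        have : (r:ℕ) + 1 ≤ k := by omega
        exact_mod_cast this
      rw [hK, min_eq_right hkr]
  have hLk : ∑ r, d r * mn r ≤ maxSum m x k := by
    have h1 := sum_le_maxSum m k x (α q) hqcard
    rw [hγ (α q)] at h1
    calc ∑ r, d r * mn r = ∑ r, d r * ((α q ∩ α r).card : ℝ) := by
          apply Finset.sum_congr rfl; intro r _; rw [hmin r]
      _ ≤ maxSum m x k := h1
  -- quadratic form expansion
  set C : Fin m → Fin m → ℝ := fun r s => ∑ i ∈ α r, ∑ j ∈ α s, A i j with hCdef
  have hQF : ∀ M : Matrix (Fin m) (Fin m) ℝ,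
      (∑ i, ∑ j, M i j * x i * x j)
        = ∑ r, ∑ s, d r * d s * (∑ i ∈ α r, ∑ j ∈ α s, M i j) := by
    intro M
    calc ∑ i, ∑ j, M i j * x i * x j
        = ∑ i, (∑ j, M i j * x j) * x i := by
          apply Finset.sum_congr rfl; intro i _
          rw [Finset.sum_mul]
          apply Finset.sum_congr rfl; intro j _; ring
      _ = ∑ r, d r * ∑ i ∈ α r, ∑ j, M i j * x j := e1 _
      _ = ∑ r, d r * ∑ s, d s * (∑ j ∈ α s, ∑ i ∈ α r, M i j) := by
          apply Finset.sum_congr rfl; intro r _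
          congr 1
          calc ∑ i ∈ α r, ∑ j, M i j * x j
              = ∑ j, (∑ i ∈ α r, M i j) * x j := by
                rw [Finset.sum_comm]
                apply Finset.sum_congr rfl; intro j _
                rw [Finset.sum_mul]
            _ = ∑ s, d s * (∑ j ∈ α s, ∑ i ∈ α r, M i j) := e1 _
      _ = ∑ r, ∑ s, d r * d s * (∑ i ∈ α r, ∑ j ∈ α s, M i j) := by
          apply Finset.sum_congr rfl; intro r _
          rw [Finset.mul_sum]
          apply Finset.sum_congr rfl; intro s _
          rw [Finset.sum_comm]
          ring
  have ht : (∑ i, ∑ j, A i j * x i * x j) = ∑ r, ∑ s, d r * d s * C r s := hQF A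
  have hone : (1:ℝ) = ∑ r, ∑ s, d r * d s * (Rr r * Rr s) := by
    have h1 : (∑ i, ∑ j, (Matrix.of fun _ _ => (1:ℝ)) i j * x i * x j)
        = ∑ r, ∑ s, d r * d s * (∑ i ∈ α r, ∑ j ∈ α s, (Matrix.of fun _ _ => (1:ℝ)) i j) :=
      hQF (Matrix.of fun _ _ => (1:ℝ))
    have h2 : (∑ i, ∑ j, (Matrix.of fun _ _ => (1:ℝ)) i j * x i * x j) = 1 := by
      simp only [Matrix.of_apply, one_mul]
      rw [← Finset.sum_mul_sum]
      rw [hx1, mul_one]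
    have h3 : ∀ r s : Fin m, (∑ i ∈ α r, ∑ j ∈ α s, (Matrix.of fun _ _ => (1:ℝ)) i j)
        = Rr r * Rr s := by
      intro r s
      simp only [Matrix.of_apply, Finset.sum_const, nsmul_eq_mul, mul_one]
      rw [hRcast r, hRcast s]
    rw [← h2, h1]
    apply Finset.sum_congr rfl; intro r _
    apply Finset.sum_congr rfl; intro s _
    rw [h3 r s]
  -- linearity helper
  have hlin : ∀ (a b : ℝ) (F G : Fin m → Fin m → ℝ),
      a * (∑ r, ∑ s, d r * d s * F r s) + b * (∑ r, ∑ s, d r * d s * G r s)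
      = ∑ r, ∑ s, d r * d s * (a * F r s + b * G r s) := by
    intro a b F G
    rw [Finset.mul_sum, Finset.mul_sum, ← Finset.sum_add_distrib]
    apply Finset.sum_congr rfl; intro r _
    rw [Finset.mul_sum, Finset.mul_sum, ← Finset.sum_add_distrib]
    apply Finset.sum_congr rfl; intro s _; ring
  -- symmetrization
  have hsym_le : ∀ F G : Fin m → Fin m → ℝ, (∀ r s, F r s + F s r ≤ G r s + G s r) →
      ∑ r, ∑ s, d r * d s * F r s ≤ ∑ r, ∑ s, d r * d s * G r s := by
    intro F G hpt
    have hswap : ∀ H : Fin m → Fin m → ℝ,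
        ∑ r, ∑ s, d r * d s * H r s = ∑ r, ∑ s, d r * d s * H s r := by
      intro H
      rw [Finset.sum_comm]
      apply Finset.sum_congr rfl; intro r _
      apply Finset.sum_congr rfl; intro s _
      ring
    have h2 : ∀ H : Fin m → Fin m → ℝ, 2 * (∑ r, ∑ s, d r * d s * H r s)
        = ∑ r, ∑ s, d r * d s * (H r s + H s r) := by
      intro H
      have := hlin 1 1 H (fun r s => H s r)
      simp only [one_mul] at this
      rw [two_mul]
      nth_rewrite 2 [hswap H]
      rw [this]
    have h3 : ∑ r, ∑ s, d r * d s * (F r s + F s r) ≤ ∑ r, ∑ s, d r * d s * (G r s + G s r) := by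
      apply Finset.sum_le_sum; intro r _
      apply Finset.sum_le_sum; intro s _
      exact mul_le_mul_of_nonneg_left (hpt r s) (mul_nonneg (hd r) (hd s))
    have hF := h2 F
    have hG := h2 G
    linarith [h3]
  -- matrix bound facts transported
  have hCsym : ∀ r s : Fin m, C s r = C r s := by
    intro r s; rw [hCdef]; exact cross_swap hA (α s) (α r)
  have hC0 : ∀ r s : Fin m, 0 ≤ C r s := fun r s => cross_nonneg hA _ _
  have hCRS : ∀ r s : Fin m, C r s ≤ Rr r * Rr s := by
    intro r s
    have := cross_le_card hA (α r) (α s)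
    rwa [hRcast r, hRcast s] at this
  have h2C : ∀ r s : Fin m, r ≤ s → 2 * C r s ≤ Rr r + Rr s := by
    intro r s hrs
    have := two_cross_le hA (α r) (α s) (hαmono r s hrs)
    rwa [hRcast r, hRcast s] at this
  have hsubAB : ∀ r s : Fin m, ∑ i ∈ α r, ∑ j ∈ α s, (1 - A i j) = Rr r * Rr s - C r s := by
    intro r s
    calc ∑ i ∈ α r, ∑ j ∈ α s, (1 - A i j)
        = ∑ i ∈ α r, (((α s).card : ℝ) - ∑ j ∈ α s, A i j) := by
          apply Finset.sum_congr rfl; intro i _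
          rw [Finset.sum_sub_distrib, Finset.sum_const, nsmul_eq_mul, mul_one]
      _ = ((α r).card : ℝ) * ((α s).card : ℝ) - ∑ i ∈ α r, ∑ j ∈ α s, A i j := by
          rw [Finset.sum_sub_distrib, Finset.sum_const, nsmul_eq_mul]
      _ = Rr r * Rr s - C r s := by rw [hRcast r, hRcast s]
  have hB4 : ∀ r s : Fin m, 2 * (Rr r * Rr s - C r s) ≤ Rr r * (2 * Mr - 1) := by
    intro r s
    have h := cb_le_row hA (α r) (α s)
    rw [hsubAB r s] at h
    rwa [hRcast r, ← hMr] at h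
  have hB5 : ∀ r s : Fin m, Rr r * Rr s - C r s ≤ Mr * Mr - Mr := by
    intro r s
    have h := cb_le_total hA (α r) (α s)
    rw [hsubAB r s] at h
    rwa [← hMr] at h
  -- pointwise inequality 1
  have hpt1main : ∀ r s : Fin m, r ≤ s →
      ((Mr - K) * C r s + (K - 1) * (Rr r * Rr s)) + ((Mr - K) * C s r + (K - 1) * (Rr s * Rr r))
      ≤ (Mr - 1) * (mn r * Rr s) + (Mr - 1) * (mn s * Rr r) := by
    intro r s hrs
    have hcs := hCsym r s
    have hrsR := hRmono r s hrs
    rcases le_or_gt ((s:ℕ)+1) k with hks | hks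
    · -- S ≤ K
      have hSK : Rr s ≤ K := by
        rw [hRr, hK]; dsimp only; exact_mod_cast hks
      have hmr : mn r = Rr r := by
        rw [hmn]; dsimp only; exact min_eq_right (by linarith)
      have hms : mn s = Rr s := by
        rw [hmn]; dsimp only; exact min_eq_right (by linarith)
      rw [hmr, hms, hcs]
      have := pt1a Mr K (Rr r) (Rr s) (C r s) hMK hK1 (hCRS r s) (hC0 r s)
        (by linarith [hR1 r]) (by linarith [hR1 s])
      linarith
    · have hKS : K ≤ Rr s := by
        rw [hRr, hK]; dsimp only
        have : k ≤ (s:ℕ) + 1 := by omega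
        exact_mod_cast this
      have hms : mn s = K := by
        rw [hmn]; dsimp only; exact min_eq_left hKS
      rcases le_or_gt k ((r:ℕ)+1) with hkr | hkr
      · -- K ≤ R
        have hKR : K ≤ Rr r := by
          rw [hRr, hK]; dsimp only; exact_mod_cast hkr
        have hmr : mn r = K := by
          rw [hmn]; dsimp only; exact min_eq_left hKR
        rw [hmr, hms, hcs]
        have := pt1c Mr K (Rr r) (Rr s) (C r s) hMK hK1 (hR1 r) hrsR (hRM s)
          (h2C r s hrs) (hC0 r s)
        linarith
      · -- R ≤ K
        have hRK : Rr r ≤ K := by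
          rw [hRr, hK]; dsimp only
          have : (r:ℕ) + 1 ≤ k := le_of_lt hkr
          exact_mod_cast this
        have hmr : mn r = Rr r := by
          rw [hmn]; dsimp only; exact min_eq_right hRK
        rw [hmr, hms, hcs]
        have := pt1b Mr K (Rr r) (Rr s) (C r s) hMK hK1 (hR1 r) hRK hKS (hRM s)
          (h2C r s hrs) (hC0 r s)
        linarith
  have hpt1 : ∀ r s : Fin m,
      ((Mr - K) * C r s + (K - 1) * (Rr r * Rr s)) + ((Mr - K) * C s r + (K - 1) * (Rr s * Rr r))
      ≤ (Mr - 1) * (mn r * Rr s) + (Mr - 1) * (mn s * Rr r) := by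
    intro r s
    rcases le_total r s with h | h
    · exact hpt1main r s h
    · have := hpt1main s r h
      linarith
  -- pointwise inequality 2
  have hpt2main : ∀ r s : Fin m, r ≤ s →
      (K * (Rr r * Rr s) + (-K) * C r s) + (K * (Rr s * Rr r) + (-K) * C s r)
      ≤ (Mr - 1) * (mn r * Rr s) + (Mr - 1) * (mn s * Rr r) := by
    intro r s hrs
    have hcs := hCsym r s
    have hrsR := hRmono r s hrs
    have he0 : 0 ≤ Rr r * Rr s - C r s := by linarith [hCRS r s]
    have heRS : Rr r * Rr s - C r s ≤ Rr r * Rr s := by linarith [hC0 r s]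
    rcases le_or_gt ((s:ℕ)+1) k with hks | hks
    · have hSK : Rr s ≤ K := by
        rw [hRr, hK]; dsimp only; exact_mod_cast hks
      have hmr : mn r = Rr r := by
        rw [hmn]; dsimp only; exact min_eq_right (by linarith)
      have hms : mn s = Rr s := by
        rw [hmn]; dsimp only; exact min_eq_right (by linarith)
      rw [hmr, hms, hcs]
      have := pt2a Mr K (Rr r) (Rr s) (Rr r * Rr s - C r s) hMK hK1 heRS he0
        (by linarith [hR1 r]) (by linarith [hR1 s])
      linarith
    · have hKS : K ≤ Rr s := by
        rw [hRr, hK]; dsimp only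
        have : k ≤ (s:ℕ) + 1 := by omega
        exact_mod_cast this
      have hms : mn s = K := by
        rw [hmn]; dsimp only; exact min_eq_left hKS
      rcases le_or_gt k ((r:ℕ)+1) with hkr | hkr
      · have hKR : K ≤ Rr r := by
          rw [hRr, hK]; dsimp only; exact_mod_cast hkr
        have hmr : mn r = K := by
          rw [hmn]; dsimp only; exact min_eq_left hKR
        rw [hmr, hms, hcs]
        have := pt2c Mr K (Rr r) (Rr s) (Rr r * Rr s - C r s) hMK hK1 hM2 (hR1 r) hrsR hKR
          (hRM s) (hRd s) (hRd r) heRS he0 (hB4 r s) (hB5 r s)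
        linarith
      · have hRK : Rr r ≤ K := by
          rw [hRr, hK]; dsimp only
          have : (r:ℕ) + 1 ≤ k := le_of_lt hkr
          exact_mod_cast this
        have hmr : mn r = Rr r := by
          rw [hmn]; dsimp only; exact min_eq_right hRK
        rw [hmr, hms, hcs]
        have := pt2b Mr K (Rr r) (Rr s) (Rr r * Rr s - C r s) hMK hK1 (hR1 r) hRK hKS
          (hRM s) (hRd s) heRS he0 (hB4 r s)
        linarith
  have hpt2 : ∀ r s : Fin m,
      (K * (Rr r * Rr s) + (-K) * C r s) + (K * (Rr s * Rr r) + (-K) * C s r)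
      ≤ (Mr - 1) * (mn r * Rr s) + (Mr - 1) * (mn s * Rr r) := by
    intro r s
    rcases le_total r s with h | h
    · exact hpt2main r s h
    · have := hpt2main s r h
      linarith
  -- RHS as double sum
  have hRHS : (Mr - 1) * (∑ r, d r * mn r)
      = ∑ r, ∑ s, d r * d s * ((Mr - 1) * (mn r * Rr s)) := by
    calc (Mr - 1) * (∑ r, d r * mn r)
        = (Mr - 1) * ((∑ r, d r * mn r) * (∑ s, d s * Rr s)) := by rw [hsum1, mul_one]
      _ = (Mr - 1) * (∑ r, ∑ s, (d r * mn r) * (d s * Rr s)) := by rw [Finset.sum_mul_sum]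
      _ = ∑ r, ∑ s, d r * d s * ((Mr - 1) * (mn r * Rr s)) := by
          rw [Finset.mul_sum]
          apply Finset.sum_congr rfl; intro r _
          rw [Finset.mul_sum]
          apply Finset.sum_congr rfl; intro s _
          ring
  have hLfin : (Mr - 1) * (∑ r, d r * mn r) ≤ (Mr - 1) * maxSum m x k :=
    mul_le_mul_of_nonneg_left hLk (by linarith)
  constructor
  · -- goal 1
    calc (Mr - K) * (∑ i, ∑ j, A i j * x i * x j) + (K - 1)
        = (Mr - K) * (∑ r, ∑ s, d r * d s * C r s)
            + (K - 1) * (∑ r, ∑ s, d r * d s * (Rr r * Rr s)) := by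
          rw [← ht, ← hone]; ring
      _ = ∑ r, ∑ s, d r * d s * ((Mr - K) * C r s + (K - 1) * (Rr r * Rr s)) :=
          hlin (Mr - K) (K - 1) C (fun r s => Rr r * Rr s)
      _ ≤ ∑ r, ∑ s, d r * d s * ((Mr - 1) * (mn r * Rr s)) := by
          apply hsym_le
          intro r s
          have := hpt1 r s
          linarith
      _ = (Mr - 1) * (∑ r, d r * mn r) := hRHS.symm
      _ ≤ (Mr - 1) * maxSum m x k := hLfin
  · -- goal 2
    calc K * (1 - ∑ i, ∑ j, A i j * x i * x j)
        = K * (∑ r, ∑ s, d r * d s * (Rr r * Rr s))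
            + (-K) * (∑ r, ∑ s, d r * d s * C r s) := by
          rw [← ht, ← hone]; ring
      _ = ∑ r, ∑ s, d r * d s * (K * (Rr r * Rr s) + (-K) * C r s) :=
          hlin K (-K) (fun r s => Rr r * Rr s) C
      _ ≤ ∑ r, ∑ s, d r * d s * ((Mr - 1) * (mn r * Rr s)) := by
          apply hsym_le
          intro r s
          have := hpt2 r s
          linarith
      _ = (Mr - 1) * (∑ r, d r * mn r) := hRHS.symm
      _ ≤ (Mr - 1) * maxSum m x k := hLfin


lemma sum_one_sub {m : ℕ} (α β : Finset (Fin m)) (M : Matrix (Fin m) (Fin m) ℝ) :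
    ∑ i ∈ α, ∑ j ∈ β, (1 - M i j) = (α.card : ℝ) * β.card - ∑ i ∈ α, ∑ j ∈ β, M i j := by
  calc ∑ i ∈ α, ∑ j ∈ β, (1 - M i j)
      = ∑ i ∈ α, ((β.card : ℝ) - ∑ j ∈ β, M i j) := by
        apply Finset.sum_congr rfl; intro i _
        rw [Finset.sum_sub_distrib, Finset.sum_const, nsmul_eq_mul, mul_one]
    _ = (α.card : ℝ) * β.card - ∑ i ∈ α, ∑ j ∈ β, M i j := by
        rw [Finset.sum_sub_distrib, Finset.sum_const, nsmul_eq_mul]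

set_option maxHeartbeats 1000000 in
/-- Any `A₁ ∈ U_1` can be completed to a family `A₁, …, A_m ∈ U_1` summing to `E`
whose associated quadratic stochastic operator is doubly stochastic. -/
theorem extend_to_dsqo (m : ℕ) [NeZero m] (A₁ : Matrix (Fin m) (Fin m) ℝ)
    (hA₁ : A₁ ∈ U1 m) :
    ∃ A : Fin m → Matrix (Fin m) (Fin m) ℝ,
      A 0 = A₁ ∧ (∀ k, A k ∈ U1 m) ∧ (∑ k, A k) = Ematrix m ∧
        IsDSQO m (fun i j k => A k i j) := by
  rcases Nat.lt_or_ge m 2 with hm | hm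
  · -- m = 1
    have hm1 : m = 1 := by have := NeZero.pos m; omega
    subst hm1
    have hE : A₁ = Ematrix 1 := by
      have h := hA₁.2.2.2
      simp only [Fin.sum_univ_one] at h
      ext i j
      have hi : i = 0 := Subsingleton.elim i 0
      have hj : j = 0 := Subsingleton.elim j 0
      subst hi; subst hj
      simpa [Ematrix] using h
    refine ⟨fun _ => A₁, rfl, fun _ => hA₁, by simp [hE], ?_, ?_⟩
    · refine ⟨fun i j l => symm_apply hA₁ i j, fun i j l => hA₁.2.1 i j, fun i j => ?_⟩
      simp only [Fin.sum_univ_one]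
      have := congrFun (congrFun hE i) j
      simpa [Ematrix] using this
    · intro x hx k hk1 hk2
      omega
  · -- m ≥ 2
    have hm1R : (0:ℝ) < (m:ℝ) - 1 := by
      have : (2:ℝ) ≤ (m:ℝ) := by exact_mod_cast hm
      linarith
    have hm1ne : ((m:ℝ) - 1) ≠ 0 := ne_of_gt hm1R
    set c : ℝ := ((m:ℝ) - 1)⁻¹ with hc
    have hc0 : 0 < c := inv_pos.2 hm1R
    have hcm : ((m:ℝ) - 1) * c = 1 := mul_inv_cancel₀ hm1ne
    set B : Matrix (Fin m) (Fin m) ℝ := c • (Ematrix m - A₁) with hB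
    have hBapp : ∀ i j, B i j = c * (1 - A₁ i j) := by
      intro i j
      rw [hB]
      simp [Ematrix, Matrix.smul_apply, Matrix.sub_apply]
    have hle1 : ∀ i j, A₁ i j ≤ 1 := entry_le_one hA₁
    have hpos : ∀ i j, 0 ≤ A₁ i j := hA₁.2.1
    have hBsum : ∀ α β : Finset (Fin m),
        ∑ i ∈ α, ∑ j ∈ β, B i j
          = c * ((α.card : ℝ) * β.card - ∑ i ∈ α, ∑ j ∈ β, A₁ i j) := by
      intro α β
      rw [← sum_one_sub, Finset.mul_sum]
      apply Finset.sum_congr rfl; intro i _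
      rw [Finset.mul_sum]
      exact Finset.sum_congr rfl (fun j _ => hBapp i j)
    have hBU1 : B ∈ U1 m := by
      refine ⟨?_, ?_, ?_, ?_⟩
      · apply Matrix.IsSymm.ext
        intro i j
        rw [hBapp i j, hBapp j i, symm_apply hA₁ j i]
      · intro i j
        rw [hBapp i j]
        have := hle1 i j
        nlinarith
      · intro β
        rw [hBsum β β]
        have hS0 : 0 ≤ ∑ i ∈ β, ∑ j ∈ β, A₁ i j := cross_nonneg hA₁ β β
        rcases Nat.lt_or_ge β.card m with hcard | hcard
        · have hcard' : (β.card : ℝ) ≤ (m:ℝ) - 1 := by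
            have : β.card + 1 ≤ m := hcard
            have := (Nat.cast_le (α := ℝ)).2 this
            push_cast at this
            linarith
          have h1 : (β.card : ℝ) * β.card - ∑ i ∈ β, ∑ j ∈ β, A₁ i j
              ≤ (β.card : ℝ) * ((m:ℝ) - 1) := by
            nlinarith [Nat.cast_nonneg (α := ℝ) β.card]
          calc c * ((β.card : ℝ) * β.card - ∑ i ∈ β, ∑ j ∈ β, A₁ i j)
              ≤ c * ((β.card : ℝ) * ((m:ℝ) - 1)) := by
                exact mul_le_mul_of_nonneg_left h1 (le_of_lt hc0)
            _ = (β.card : ℝ) := by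
                rw [hc]
                field_simp
        · have hβu : β = Finset.univ := Finset.eq_univ_of_card β
            (le_antisymm (Finset.card_le_univ β |>.trans_eq (by simp)) (by simpa using hcard))
          subst hβu
          rw [hA₁.2.2.2]
          have : (Finset.univ : Finset (Fin m)).card = m := by simp
          rw [this]
          have : c * ((m:ℝ) * m - m) = m := by
            rw [hc]
            field_simp
          linarith [this]
      · have h := hBsum Finset.univ Finset.univ
        rw [hA₁.2.2.2] at h
        have hcu : ((Finset.univ : Finset (Fin m)).card : ℝ) = m := by simp
        rw [hcu] at h
        rw [h]
        rw [hc]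
        field_simp
    have hall : ∀ l : Fin m, (if l = 0 then A₁ else B) ∈ U1 m := by
      intro l
      by_cases h : l = 0
      · simpa [h] using hA₁
      · simpa [h] using hBU1
    -- sums over subsets of indices
    have hsum2 : ∀ β : Finset (Fin m), (0:Fin m) ∈ β →
        (∑ l ∈ β, if l = 0 then A₁ else B) = A₁ + (β.card - 1 : ℕ) • B := by
      intro β h0
      rw [← Finset.add_sum_erase β _ h0, if_pos rfl]
      congr 1
      rw [Finset.sum_congr rfl (fun l hl => if_neg (Finset.ne_of_mem_erase hl)),
        Finset.sum_const, Finset.card_erase_of_mem h0]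
    have hsum3 : ∀ β : Finset (Fin m), (0:Fin m) ∉ β →
        (∑ l ∈ β, if l = 0 then A₁ else B) = β.card • B := by
      intro β h0
      rw [Finset.sum_congr rfl (fun l hl => if_neg (by rintro rfl; exact h0 hl)),
        Finset.sum_const]
    have hsumA : (∑ l : Fin m, if l = 0 then A₁ else B) = Ematrix m := by
      rw [hsum2 Finset.univ (Finset.mem_univ 0)]
      have hcu : (Finset.univ : Finset (Fin m)).card - 1 = m - 1 := by
        rw [Finset.card_univ, Fintype.card_fin]
      rw [hcu]
      have hns : (m - 1 : ℕ) • B = Ematrix m - A₁ := by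
        have h1 : (m - 1 : ℕ) • B = ((m - 1 : ℕ) : ℝ) • B := (Nat.cast_smul_eq_nsmul ℝ _ B).symm
        rw [h1, hB, smul_smul]
        have hc1 : ((m - 1 : ℕ) : ℝ) = (m:ℝ) - 1 := by
          have h2 : 1 ≤ m := by omega
          push_cast [Nat.cast_sub h2]
          ring
        rw [hc1, hcm, one_smul]
      rw [hns]
      abel
    refine ⟨fun l => if l = 0 then A₁ else B, by simp, hall, hsumA, ⟨⟨?_, ?_, ?_⟩, ?_⟩⟩
    · intro i j l
      exact symm_apply (hall l) i j
    · intro i j l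
      exact (hall l).2.1 i j
    · intro i j
      calc ∑ l : Fin m, (if l = 0 then A₁ else B) i j
          = (∑ l : Fin m, if l = 0 then A₁ else B) i j := by
            rw [Matrix.sum_apply]
        _ = Ematrix m i j := by rw [hsumA]
        _ = 1 := rfl
    · -- majorization
      intro x hx k hk1 hk2
      set t : ℝ := ∑ i, ∑ j, A₁ i j * x i * x j with htdef
      have hcore := core_ineq m hm A₁ hA₁ x hx k hk1 hk2
      have hxx : ∑ i, ∑ j, x i * x j = 1 := by
        rw [← Finset.sum_mul_sum, hx.2, mul_one]
      have hL0 : 0 ≤ maxSum m x k := by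
        obtain ⟨β₀, _, hβ₀card⟩ := Finset.exists_subset_card_eq
          (by rw [Finset.card_univ, Fintype.card_fin]; omega : k ≤ (Finset.univ : Finset (Fin m)).card)
        have h1 := sum_le_maxSum m k x β₀ hβ₀card
        have h0 : 0 ≤ ∑ i ∈ β₀, x i := Finset.sum_nonneg fun i _ => hx.1 i
        linarith
      have hpull : ∀ (u : ℝ) (f : Fin m → Fin m → ℝ),
          ∑ i, ∑ j, u * f i j = u * ∑ i, ∑ j, f i j := by
        intro u f
        rw [Finset.mul_sum]
        apply Finset.sum_congr rfl; intro i _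
        rw [Finset.mul_sum]
      have hexp : ∀ w : ℝ, (∑ i, ∑ j, (A₁ i j + w * (1 - A₁ i j)) * x i * x j)
          = (1 - w) * t + w := by
        intro w
        calc ∑ i, ∑ j, (A₁ i j + w * (1 - A₁ i j)) * x i * x j
            = ∑ i, ∑ j, ((1 - w) * (A₁ i j * x i * x j) + w * (x i * x j)) := by
              apply Finset.sum_congr rfl; intro i _
              apply Finset.sum_congr rfl; intro j _
              ring
          _ = ∑ i, (∑ j, (1 - w) * (A₁ i j * x i * x j) + ∑ j, w * (x i * x j)) := by
              apply Finset.sum_congr rfl; intro i _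
              rw [Finset.sum_add_distrib]
          _ = ∑ i, ∑ j, (1 - w) * (A₁ i j * x i * x j) + ∑ i, ∑ j, w * (x i * x j) :=
              Finset.sum_add_distrib
          _ = (1 - w) * t + w := by
              rw [hpull (1 - w) (fun i j => A₁ i j * x i * x j), hpull w (fun i j => x i * x j)]
              rw [hxx, htdef, mul_one]
      have hexp2 : ∀ w : ℝ, (∑ i, ∑ j, (w * (1 - A₁ i j)) * x i * x j)
          = w * (1 - t) := by
        intro w
        calc ∑ i, ∑ j, (w * (1 - A₁ i j)) * x i * x j
            = ∑ i, ∑ j, (w * (x i * x j) + (-w) * (A₁ i j * x i * x j)) := by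
              apply Finset.sum_congr rfl; intro i _
              apply Finset.sum_congr rfl; intro j _
              ring
          _ = ∑ i, (∑ j, w * (x i * x j) + ∑ j, (-w) * (A₁ i j * x i * x j)) := by
              apply Finset.sum_congr rfl; intro i _
              rw [Finset.sum_add_distrib]
          _ = ∑ i, ∑ j, w * (x i * x j) + ∑ i, ∑ j, (-w) * (A₁ i j * x i * x j) :=
              Finset.sum_add_distrib
          _ = w * (1 - t) := by
              rw [hpull w (fun i j => x i * x j), hpull (-w) (fun i j => A₁ i j * x i * x j)]
              rw [hxx, htdef]
              ring
      apply maxSum_le m k _ _ hL0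
      intro β hβ
      have hsplitβ : ∑ l ∈ β, QSOMap m (fun i j l => (if l = 0 then A₁ else B) i j) x l
          = ∑ i, ∑ j, ((∑ l ∈ β, if l = 0 then A₁ else B) i j) * x i * x j := by
        calc ∑ l ∈ β, QSOMap m (fun i j l => (if l = 0 then A₁ else B) i j) x l
            = ∑ l ∈ β, ∑ i, ∑ j, (if l = 0 then A₁ else B) i j * x i * x j := rfl
          _ = ∑ i, ∑ l ∈ β, ∑ j, (if l = 0 then A₁ else B) i j * x i * x j := Finset.sum_comm
          _ = ∑ i, ∑ j, ∑ l ∈ β, (if l = 0 then A₁ else B) i j * x i * x j := by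
              apply Finset.sum_congr rfl; intro i _
              exact Finset.sum_comm
          _ = ∑ i, ∑ j, ((∑ l ∈ β, if l = 0 then A₁ else B) i j) * x i * x j := by
              apply Finset.sum_congr rfl; intro i _
              apply Finset.sum_congr rfl; intro j _
              rw [Matrix.sum_apply, ← Finset.sum_mul, ← Finset.sum_mul]
      rw [hsplitβ]
      by_cases h0 : (0 : Fin m) ∈ β
      · -- w = (k-1) * c
        have hw : ∀ i j : Fin m, ((∑ l ∈ β, if l = 0 then A₁ else B) i j)
            = A₁ i j + (((k:ℝ) - 1) * c) * (1 - A₁ i j) := by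
          intro i j
          rw [hsum2 β h0, Matrix.add_apply, Matrix.smul_apply, hBapp i j]
          rw [nsmul_eq_mul]
          have hcast : ((β.card - 1 : ℕ) : ℝ) = (k:ℝ) - 1 := by
            rw [hβ]
            have h2 : 1 ≤ k := hk1
            push_cast [Nat.cast_sub h2]
            ring
          rw [hcast]
          ring
        rw [Finset.sum_congr rfl (fun i _ => Finset.sum_congr rfl (fun j _ => by rw [hw i j]))]
        rw [hexp (((k:ℝ) - 1) * c)]
        have hident : ((m:ℝ) - 1) * ((1 - ((k:ℝ) - 1) * c) * t + ((k:ℝ) - 1) * c)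
            = ((m:ℝ) - (k:ℝ)) * t + ((k:ℝ) - 1) := by
          rw [hc]
          field_simp
          ring
        have h2 : ((m:ℝ) - 1) * ((1 - ((k:ℝ) - 1) * c) * t + ((k:ℝ) - 1) * c)
            ≤ ((m:ℝ) - 1) * maxSum m x k := by
          rw [hident]
          exact hcore.1
        exact le_of_mul_le_mul_left h2 hm1R
      · -- w = k * c
        have hw : ∀ i j : Fin m, ((∑ l ∈ β, if l = 0 then A₁ else B) i j)
            = ((k:ℝ) * c) * (1 - A₁ i j) := by
          intro i j
          rw [hsum3 β h0, Matrix.smul_apply, hBapp i j]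
          rw [nsmul_eq_mul, hβ]
          ring
        rw [Finset.sum_congr rfl (fun i _ => Finset.sum_congr rfl (fun j _ => by rw [hw i j]))]
        rw [hexp2 ((k:ℝ) * c)]
        have hident : ((m:ℝ) - 1) * (((k:ℝ) * c) * (1 - t)) = (k:ℝ) * (1 - t) := by
          rw [hc]
          field_simp
        have h2 : ((m:ℝ) - 1) * (((k:ℝ) * c) * (1 - t)) ≤ ((m:ℝ) - 1) * maxSum m x k := by
          rw [hident]
          exact hcore.2
        exact le_of_mul_le_mul_left h2 hm1R
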